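/- Let X be a compact Hausdorff space that is the union of countably many countably tight subspaces. Then no closed subspace of X can be mapped by a continuous surjection onto the Cantor cube {0,1}^{ω₁}. -/

import Mathlib

open Set Cardinal

/-- A topological space `Z` is countably tight if whenever a point lies in the closure
of a set `A`, it lies in the closure of a countable subset of `A`. -/
def CountablyTight (Z : Type*) [TopologicalSpace Z] : Prop :=
  ∀ (A : Set Z) (z : Z), z ∈ closure A → ∃ B ⊆ A, B.Countable ∧ z ∈ closure B

namespace SigmaCTAux

variable {X : Type*} [TopologicalSpace X] [CompactSpace X]
variable {I : Type*} {T : Type*} [LinearOrder T]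

/-- `Z` realizes every `Bool` pattern along the coordinates `ρ`. -/
def Big (h : X → I → Bool) (Z : Set X) (ρ : T → I) : Prop :=
  ∀ z : T → Bool, ∃ p ∈ Z, ∀ ξ : T, h p (ρ ξ) = z ξ

omit [CompactSpace X] in
theorem isClosed_coord (h : X → I → Bool) (hh : Continuous h) (i : I) (b : Bool) :
    IsClosed {x : X | h x i = b} := by
  have : Continuous fun x : X => h x i := (continuous_apply i).comp hh
  exact IsClosed.preimage this (isClosed_singleton (x := b))

/-- The key step: given a "big" closed set `Z`, find a smaller big closed set
disjoint from a single countably tight piece `Y`. -/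
theorem step [Nonempty T]
    (hbound : ∀ B : Set T, B.Countable → ∃ δ : T, ∀ b ∈ B, b < δ)
    (e : (T ⊕ T ⊕ T) ≃ T)
    (h : X → I → Bool) (hh : Continuous h)
    (Y : Set X)
    (hY : ∀ S ⊆ Y, ∀ y ∈ Y, y ∈ closure S → ∃ B ⊆ S, B.Countable ∧ y ∈ closure B)
    (Z : Set X) (ρ : T → I) (hZc : IsClosed Z) (hbig : Big h Z ρ) :
    ∃ d : Set X × (T → I),
      (IsClosed d.1 ∧ Big h d.1 d.2) ∧ d.1 ⊆ Z ∧ d.1 ∩ Y = ∅ := by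
  classical
  set ι₀ : T → I := fun a => ρ (e (Sum.inl a)) with hι₀
  set ι₁ : T → I := fun a => ρ (e (Sum.inr (Sum.inl a))) with hι₁
  set ι₂ : T → I := fun a => ρ (e (Sum.inr (Sum.inr a))) with hι₂
  by_cases HA : ∀ (δ : T) (t : Finset T) (v : T → Bool),
      ∃ p, p ∈ Z ∧ p ∈ Y ∧ (∀ ξ : T, h p (ι₀ ξ) = decide (ξ ≤ δ)) ∧
        ∀ i ∈ t, h p (ι₁ i) = v i
  · -- Case A : the piece `Y` meets every chain-pattern-with-finite-box cylinder.
    choose P hPZ hPY hP0 hP1 using HA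
    set S : T → Set X := fun δ => {x | ∃ δ' t v, δ ≤ δ' ∧ x = P δ' t v} with hSdef
    have hSsubZ : ∀ δ, S δ ⊆ Z := by
      rintro δ x ⟨δ', t, v, _, rfl⟩; exact hPZ δ' t v
    have hSsubY : ∀ δ, S δ ⊆ Y := by
      rintro δ x ⟨δ', t, v, _, rfl⟩; exact hPY δ' t v
    have hS0 : ∀ δ δ₁, S δ ⊆ {x | h x (ι₀ δ₁) = decide (δ₁ ≤ δ)} → True := fun _ _ _ => trivial
    refine ⟨⟨⋂ δ : T, closure (S δ), ι₁⟩,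
      ⟨isClosed_iInter fun _ => isClosed_closure, ?_⟩, ?_, ?_⟩
    · -- Bigness on `ι₁`
      intro z
      set Fam : T × Finset T → Set X := fun d =>
        closure {x | ∃ δ' t, d.1 ≤ δ' ∧ d.2 ⊆ t ∧ x = P δ' t z} with hFam
      have hne : ∀ d, (Fam d).Nonempty := fun d =>
        ⟨P d.1 d.2 z, subset_closure ⟨d.1, d.2, le_refl _, Finset.Subset.refl _, rfl⟩⟩
      have hdir : Directed (· ⊇ ·) Fam := by
        intro d₁ d₂
        refine ⟨⟨max d₁.1 d₂.1, d₁.2 ∪ d₂.2⟩, closure_mono ?_, closure_mono ?_⟩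
        · rintro x ⟨δ', t, hδ, ht, rfl⟩
          exact ⟨δ', t, le_trans (le_max_left _ _) hδ,
            fun i hi => ht (Finset.mem_union_left _ hi), rfl⟩
        · rintro x ⟨δ', t, hδ, ht, rfl⟩
          exact ⟨δ', t, le_trans (le_max_right _ _) hδ,
            fun i hi => ht (Finset.mem_union_right _ hi), rfl⟩
      obtain ⟨p, hp⟩ :=
        IsCompact.nonempty_iInter_of_directed_nonempty_isCompact_isClosed Fam hdir hne
          (fun d => isClosed_closure.isCompact) (fun d => isClosed_closure)
      refine ⟨p, ?_, ?_⟩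
      · refine mem_iInter.2 fun δ => ?_
        have h1 : p ∈ Fam ⟨δ, ∅⟩ := mem_iInter.1 hp ⟨δ, ∅⟩
        refine closure_mono ?_ h1
        rintro x ⟨δ', t, hδ, _, rfl⟩
        exact ⟨δ', t, z, hδ, rfl⟩
      · intro i
        have h1 : p ∈ Fam ⟨Classical.arbitrary T, {i}⟩ :=
          mem_iInter.1 hp ⟨Classical.arbitrary T, {i}⟩
        have h2 : {x | ∃ δ' t, Classical.arbitrary T ≤ δ' ∧ ({i} : Finset T) ⊆ t ∧
            x = P δ' t z} ⊆ {x | h x (ι₁ i) = z i} := by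
          rintro x ⟨δ', t, _, ht, rfl⟩
          exact hP1 δ' t z i (ht (Finset.mem_singleton_self i))
        exact closure_minimal h2 (isClosed_coord h hh _ _) h1
    · -- contained in `Z`
      refine (iInter_subset _ (Classical.arbitrary T)).trans ?_
      exact closure_minimal (hSsubZ _) hZc
    · -- disjoint from `Y`
      rw [eq_empty_iff_forall_notMem]
      rintro y ⟨hyI, hyY⟩
      have hycl : y ∈ closure (S (Classical.arbitrary T)) :=
        mem_iInter.1 hyI (Classical.arbitrary T)
      obtain ⟨B, hBS, hBc, hyB⟩ := hY (S (Classical.arbitrary T)) (hSsubY _) y hyY hycl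
      -- bound the chain indices occurring in `B`
      have hBmem : ∀ b ∈ B, ∃ δ' t v, Classical.arbitrary T ≤ δ' ∧ b = P δ' t v :=
        fun b hb => hBS hb
      have hidx : ∀ b : ↥B, ∃ δ' : T, ∃ t v, b.1 = P δ' t v := by
        rintro ⟨b, hb⟩
        obtain ⟨δ', t, v, _, hbe⟩ := hBmem b hb
        exact ⟨δ', t, v, hbe⟩
      choose g gt gv hg using hidx
      have hcnt : (range g).Countable := by
        haveI : Countable ↥B := hBc.to_subtype
        exact countable_range g
      obtain ⟨δb, hδb⟩ := hbound (range g) hcnt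
      have h1 : h y (ι₀ δb) = false := by
        have hBsub : B ⊆ {x | h x (ι₀ δb) = false} := by
          intro b hb
          have hbe := hg ⟨b, hb⟩
          have hlt : g ⟨b, hb⟩ < δb := hδb _ ⟨⟨b, hb⟩, rfl⟩
          show h b (ι₀ δb) = false
          rw [show b = P (g ⟨b, hb⟩) (gt ⟨b, hb⟩) (gv ⟨b, hb⟩) from hbe, hP0]
          exact decide_eq_false (not_le.2 hlt)
        exact closure_minimal hBsub (isClosed_coord h hh _ _) hyB
      have h2 : h y (ι₀ δb) = true := by
        have hy2 : y ∈ closure (S δb) := mem_iInter.1 hyI δb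
        have hSsub : S δb ⊆ {x | h x (ι₀ δb) = true} := by
          rintro x ⟨δ', t, v, hle, rfl⟩
          show h (P δ' t v) (ι₀ δb) = true
          rw [hP0]
          exact decide_eq_true hle
        exact closure_minimal hSsub (isClosed_coord h hh _ _) hy2
      rw [h1] at h2
      exact Bool.false_ne_true h2
  · -- Case B : some cylinder misses `Y`; pin it.
    push_neg at HA
    obtain ⟨δ, t, v, hempty⟩ := HA
    set v' : T → Bool := fun i => if i ∈ t then v i else false with hv'
    refine ⟨⟨Z ∩ ({x | ∀ ξ : T, h x (ι₀ ξ) = decide (ξ ≤ δ)} ∩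
        {x | ∀ i : T, h x (ι₁ i) = v' i}), ι₂⟩, ⟨?_, ?_⟩, inter_subset_left, ?_⟩
    · refine hZc.inter (IsClosed.inter ?_ ?_)
      · have : {x : X | ∀ ξ : T, h x (ι₀ ξ) = decide (ξ ≤ δ)} =
            ⋂ ξ : T, {x : X | h x (ι₀ ξ) = decide (ξ ≤ δ)} := by
          ext x; simp [mem_iInter]
        rw [this]
        exact isClosed_iInter fun ξ => isClosed_coord h hh (ι₀ ξ) (decide (ξ ≤ δ))
      · have : {x : X | ∀ i : T, h x (ι₁ i) = v' i} =
            ⋂ i : T, {x : X | h x (ι₁ i) = v' i} := by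
          ext x; simp [mem_iInter]
        rw [this]
        exact isClosed_iInter fun i => isClosed_coord h hh (ι₁ i) (v' i)
    · -- bigness on `ι₂`
      intro z'
      set z : T → Bool := fun ξ =>
        Sum.rec (fun a => decide (a ≤ δ))
          (Sum.rec (fun i => v' i) (fun j => z' j)) (e.symm ξ) with hz
      obtain ⟨p, hpZ, hp⟩ := hbig z
      have k0 : ∀ a : T, h p (ι₀ a) = decide (a ≤ δ) := by
        intro a
        have := hp (e (Sum.inl a))
        simpa only [hz, Equiv.symm_apply_apply] using this
      have k1 : ∀ i : T, h p (ι₁ i) = v' i := by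
        intro i
        have := hp (e (Sum.inr (Sum.inl i)))
        simpa only [hz, Equiv.symm_apply_apply] using this
      have k2 : ∀ j : T, h p (ι₂ j) = z' j := by
        intro j
        have := hp (e (Sum.inr (Sum.inr j)))
        simpa only [hz, Equiv.symm_apply_apply] using this
      exact ⟨p, ⟨hpZ, k0, k1⟩, k2⟩
    · rw [eq_empty_iff_forall_notMem]
      rintro y ⟨⟨hyZ, hy0, hy1⟩, hyY⟩
      obtain ⟨i, hit, hne⟩ := hempty y hyZ hyY hy0
      apply hne
      have := hy1 i
      simpa only [hv', if_pos hit] using this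

/-- Main combinatorial lemma: a compact space covered by countably many
countably tight pieces admits no continuous surjection onto `2^T` with `T`
an `ω₁`-like order. -/
theorem main [Nonempty T]
    (hbound : ∀ B : Set T, B.Countable → ∃ δ : T, ∀ b ∈ B, b < δ)
    (e : (T ⊕ T ⊕ T) ≃ T)
    (ρ₀ : T → I) (hρ₀ : Function.Injective ρ₀)
    (Y : ℕ → Set X)
    (hY : ∀ n, ∀ S ⊆ Y n, ∀ y ∈ Y n, y ∈ closure S →
      ∃ B ⊆ S, B.Countable ∧ y ∈ closure B)
    (hcov : ∀ x : X, ∃ n, x ∈ Y n)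
    (h : X → I → Bool) (hh : Continuous h) (hs : Function.Surjective h) : False := by
  classical
  have hbig0 : Big h (univ : Set X) ρ₀ := by
    intro z
    set q : I → Bool := fun i => if hc : ∃ ξ, ρ₀ ξ = i then z hc.choose else false with hq
    obtain ⟨p, hp⟩ := hs q
    refine ⟨p, mem_univ _, fun ξ => ?_⟩
    have hex : ∃ ξ', ρ₀ ξ' = ρ₀ ξ := ⟨ξ, rfl⟩
    have hch : hex.choose = ξ := hρ₀ hex.choose_spec
    calc h p (ρ₀ ξ) = q (ρ₀ ξ) := by rw [hp]
    _ = z hex.choose := by rw [hq]; exact dif_pos hex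
    _ = z ξ := by rw [hch]
  have hstep := fun (n : ℕ) => step hbound e h hh (Y n) (hY n)
  -- recursive construction
  let Rec : ℕ → {d : Set X × (T → I) // IsClosed d.1 ∧ Big h d.1 d.2} := fun n =>
    Nat.rec ⟨⟨univ, ρ₀⟩, isClosed_univ, hbig0⟩
      (fun n prev =>
        ⟨(hstep n prev.1.1 prev.1.2 prev.2.1 prev.2.2).choose,
         (hstep n prev.1.1 prev.1.2 prev.2.1 prev.2.2).choose_spec.1⟩) n
  have hsucc : ∀ n : ℕ, (Rec (n + 1)).1.1 ⊆ (Rec n).1.1 ∧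
      (Rec (n + 1)).1.1 ∩ Y n = ∅ := fun n =>
    (hstep n (Rec n).1.1 (Rec n).1.2 (Rec n).2.1 (Rec n).2.2).choose_spec.2
  have hne : ∀ n, ((Rec n).1.1).Nonempty := by
    intro n
    obtain ⟨p, hp, _⟩ := (Rec n).2.2 fun _ => false
    exact ⟨p, hp⟩
  have hint : (⋂ n, (Rec n).1.1).Nonempty :=
    IsCompact.nonempty_iInter_of_sequence_nonempty_isCompact_isClosed _
      (fun n => (hsucc n).1) hne ((Rec 0).2.1.isCompact) (fun n => (Rec n).2.1)
  obtain ⟨x, hx⟩ := hint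
  obtain ⟨n, hxn⟩ := hcov x
  have hx1 : x ∈ (Rec (n + 1)).1.1 := mem_iInter.1 hx (n + 1)
  have : x ∈ (Rec (n + 1)).1.1 ∩ Y n := ⟨hx1, hxn⟩
  rw [(hsucc n).2] at this
  exact this

end SigmaCTAux

theorem stmt_3 {X : Type*} [TopologicalSpace X] [CompactSpace X] [T2Space X]
    (A : ℕ → Set X) (hct : ∀ n, CountablyTight ↥(A n)) (hcover : ⋃ n, A n = Set.univ)
    (F : Set X) (hF : IsClosed F)
    (f : ↥F → ((Cardinal.aleph 1 : Cardinal.{0}).out → Bool))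
    (hf : Continuous f) :
    ¬ Function.Surjective f := by
  classical
  intro hs
  haveI : CompactSpace ↥F := isCompact_iff_compactSpace.mp hF.isCompact
  -- the ω₁-like index order
  set T : Type := ((Cardinal.aleph 1 : Cardinal.{0}).ord).ToType with hT
  have hcardT : #T = (Cardinal.aleph 1 : Cardinal.{0}) := by
    rw [hT, Cardinal.mk_toType, Cardinal.card_ord]
  have haleph1_ne : (Cardinal.aleph 1 : Cardinal.{0}) ≠ 0 :=
    (Cardinal.aleph0_pos.trans_le (Cardinal.aleph0_le_aleph 1)).ne'
  haveI : Nonempty T := by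
    rw [hT]
    rw [Ordinal.toType_nonempty_iff_ne_zero]
    intro h0
    exact haleph1_ne (Cardinal.ord_eq_zero.mp h0)
  -- countable subsets of T are strictly bounded
  have hbound : ∀ B : Set T, B.Countable → ∃ δ : T, ∀ b ∈ B, b < δ := by
    intro B hB
    set o : Ordinal.{0} := (Cardinal.aleph 1 : Cardinal.{0}).ord with ho
    set eIso := (Ordinal.ToType.mk (o := o)) with heIso
    haveI : Countable ↥B := hB.to_subtype
    set g : ↥B → Ordinal.{0} := fun b => (eIso.symm b.1).1 with hg
    have hglt : ∀ b, g b < o := fun b => (eIso.symm b.1).2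
    have hcof : #(↥B) < o.cof := by
      have h1 : #(↥B) ≤ ℵ₀ := Cardinal.mk_le_aleph0
      have h2 : o.cof = (Cardinal.aleph 1 : Cardinal.{0}) := by
        rw [ho, Cardinal.isRegular_aleph_one.cof_eq]
      rw [h2]
      exact lt_of_le_of_lt h1 (by
        have := Cardinal.aleph0_lt_aleph_one
        exact this)
    have hsup : (⨆ b, g b) < o := Ordinal.iSup_lt_ord hcof hglt
    have hsup1 : (⨆ b, g b) + 1 < o := by
      have hlim : Order.IsSuccLimit o := by
        rw [ho]
        exact Cardinal.isSuccLimit_ord (Cardinal.aleph0_le_aleph 1)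
      exact hlim.succ_lt hsup
    refine ⟨eIso ⟨(⨆ b, g b) + 1, hsup1⟩, ?_⟩
    intro b hb
    have h1 : g ⟨b, hb⟩ ≤ ⨆ b, g b := Ordinal.le_iSup g ⟨b, hb⟩
    have h2 : (eIso.symm b).1 < (⨆ b, g b) + 1 := lt_of_le_of_lt h1 (Order.lt_succ _)
    have h3 : eIso.symm b < ⟨(⨆ b, g b) + 1, hsup1⟩ := h2
    have h4 := eIso.strictMono h3
    rwa [OrderIso.apply_symm_apply] at h4
  -- an equivalence T ⊕ T ⊕ T ≃ T
  have hcard3 : #(T ⊕ T ⊕ T) = #T := by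
    rw [Cardinal.mk_sum, Cardinal.mk_sum]
    simp only [Cardinal.lift_id]
    rw [hcardT]
    rw [Cardinal.add_eq_self (Cardinal.aleph0_le_aleph 1)]
    exact Cardinal.add_eq_self (Cardinal.aleph0_le_aleph 1)
  obtain ⟨e⟩ := Cardinal.eq.mp hcard3
  -- an injection T ↪ I
  have hcardI : #T = #((Cardinal.aleph 1 : Cardinal.{0}).out) := by
    rw [hcardT, Cardinal.mk_out]
  obtain ⟨e₀⟩ := Cardinal.eq.mp hcardI
  -- the pieces inside ↥F
  set Y : ℕ → Set ↥F := fun n => Subtype.val ⁻¹' (A n) with hYdef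
  have hcov : ∀ x : ↥F, ∃ n, x ∈ Y n := by
    intro x
    have : (x : X) ∈ ⋃ n, A n := by rw [hcover]; exact mem_univ _
    obtain ⟨n, hn⟩ := mem_iUnion.mp this
    exact ⟨n, hn⟩
  -- countable tightness transfer
  have hY : ∀ n, ∀ S ⊆ Y n, ∀ y ∈ Y n, y ∈ closure S →
      ∃ B ⊆ S, B.Countable ∧ y ∈ closure B := by
    intro n S hS y hy hycl
    have h1 : (y : X) ∈ closure (Subtype.val '' S) :=
      image_closure_subset_closure_image continuous_subtype_val ⟨y, hycl, rfl⟩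
    have h2 : Subtype.val '' S ⊆ A n := by
      rintro _ ⟨s, hsS, rfl⟩
      exact hS hsS
    have hy' : (⟨(y : X), hy⟩ : ↥(A n)) ∈
        closure ((Subtype.val : ↥(A n) → X) ⁻¹' (Subtype.val '' S)) := by
      rw [closure_subtype]
      have himg : (Subtype.val : ↥(A n) → X) ''
          ((Subtype.val : ↥(A n) → X) ⁻¹' (Subtype.val '' S)) = A n ∩ Subtype.val '' S :=
        Subtype.image_preimage_coe _ _
      rw [himg]
      rwa [inter_eq_self_of_subset_right h2]
    obtain ⟨B₁, hB₁sub, hB₁c, hB₁cl⟩ := hct n _ _ hy'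
    have hC : ((Subtype.val : ↥(A n) → X) '' B₁).Countable := hB₁c.image _
    have hCy : (y : X) ∈ closure ((Subtype.val : ↥(A n) → X) '' B₁) := by
      rw [closure_subtype] at hB₁cl
      exact hB₁cl
    set B : Set ↥F := {s ∈ S | (s : X) ∈ (Subtype.val : ↥(A n) → X) '' B₁} with hBdef
    have hBsubS : B ⊆ S := fun b hb => hb.1
    have hBc : B.Countable := by
      have hsub : B ⊆ (Subtype.val : ↥F → X) ⁻¹'
          ((Subtype.val : ↥(A n) → X) '' B₁) := fun b hb => hb.2
      exact (hC.preimage Subtype.val_injective).mono hsub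
    refine ⟨B, hBsubS, hBc, ?_⟩
    rw [closure_subtype]
    have heq : (Subtype.val : ↥F → X) '' B = (Subtype.val : ↥(A n) → X) '' B₁ := by
      apply Subset.antisymm
      · rintro _ ⟨b, hb, rfl⟩
        exact hb.2
      · rintro c hc
        obtain ⟨b₁, hb₁, rfl⟩ := hc
        have hbS : (b₁ : X) ∈ Subtype.val '' S := hB₁sub hb₁
        obtain ⟨s, hsS, hse⟩ := hbS
        refine ⟨s, ⟨hsS, ?_⟩, hse⟩
        rw [hse]
        exact ⟨b₁, hb₁, rfl⟩
    rw [heq]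
    exact hCy
  exact SigmaCTAux.main hbound e e₀ e₀.injective Y hY hcov f hf hs
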